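/- Let N = 2^n - 1 with n ≥ 2, and let s be a binary sequence of period N whose support set is an (N, (N+1)/2, (N+1)/4) cyclic difference set. Let A be the circulant matrix of s. Then gcd(2^N - 1, det(A)) = 1, and consequently gcd(P_s(2), 2^N - 1) = 1, i.e. the 2-adic complexity of s equals N. -/

import Mathlib

open Matrix Finset

private lemma binsum {N : ℕ} [NeZero N] (f g : ZMod N → ℤ)
    (hf : ∀ i, f i = 0 ∨ f i = 1) (hg : ∀ i, g i = 0 ∨ g i = 1) :
    ∑ j, f j * g j = ((Finset.univ.filter fun j => f j = 1 ∧ g j = 1).card : ℤ) := by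
  rw [← Finset.sum_boole]
  refine Finset.sum_congr rfl fun j _ => ?_
  rcases hf j with h | h <;> rcases hg j with h' | h' <;> simp [h, h']

theorem stmt6 (n N : ℕ) (hn : 2 ≤ n) (hN : N = 2 ^ n - 1) [NeZero N]
    (s : ZMod N → ℤ) (hbin : ∀ i, s i = 0 ∨ s i = 1)
    (hcard : (Finset.univ.filter fun i : ZMod N => s i = 1).card = (N + 1) / 2)
    (hdiff : ∀ τ : ZMod N, τ ≠ 0 →
      ((Finset.univ.filter fun i : ZMod N => s i = 1) ∩
        ((Finset.univ.filter fun i : ZMod N => s i = 1)).image (· + τ)).card = (N + 1) / 4) :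
    Int.gcd (2 ^ N - 1) (Matrix.circulant s).det = 1 ∧
    Int.gcd (∑ i ∈ Finset.range N, s (i : ZMod N) * 2 ^ i) (2 ^ N - 1) = 1 := by
  classical
  set D := Finset.univ.filter fun i : ZMod N => s i = 1 with hD
  set L : ℕ := 2 ^ (n - 2) with hL
  have hpowL : 1 ≤ L := Nat.one_le_two_pow
  have h4L : 2 ^ n = 4 * L := by
    have : 2 ^ n = 2 ^ 2 * 2 ^ (n - 2) := by rw [← pow_add]; congr 1; omega
    rw [hL]; omega
  have hN4 : N + 1 = 4 * L := by
    have h1 : 1 ≤ 2 ^ n := Nat.one_le_two_pow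
    omega
  have hNpos : 0 < N := Nat.pos_of_ne_zero (NeZero.ne N)
  -- the key matrix identity
  have key : circulant s * (circulant s)ᵀ =
      circulant (fun i : ZMod N => if i = 0 then ((2 * L : ℕ) : ℤ) else (L : ℤ)) := by
    rw [transpose_circulant, circulant_mul]
    refine congrArg circulant (funext fun i => ?_)
    have hmv : (circulant s *ᵥ fun j => s (-j)) i = ∑ j, s (i - j) * s (-j) := by
      simp [mulVec, dotProduct, circulant_apply]
    rw [hmv, binsum _ _ (fun j => hbin _) (fun j => hbin _)]
    by_cases hi : i = 0
    · subst hi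
      rw [if_pos rfl]
      have hset : (Finset.univ.filter fun j : ZMod N => s (0 - j) = 1 ∧ s (-j) = 1)
          = D.image (fun x => -x) := by
        ext x
        simp only [Finset.mem_filter, Finset.mem_univ, true_and, Finset.mem_image, hD,
          zero_sub, and_self]
        constructor
        · intro h; exact ⟨-x, by simpa using h, by simp⟩
        · rintro ⟨y, hy, rfl⟩; simpa using hy
      rw [hset, Finset.card_image_of_injective _ neg_injective]
      rw [hD] at hcard ⊢
      rw [hcard]
      have : (N + 1) / 2 = 2 * L := by omega
      rw [this]
    · rw [if_neg hi]
      have h1 : D ∩ D.image (· + i) = Finset.univ.filter fun x : ZMod N =>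
          s x = 1 ∧ s (x - i) = 1 := by
        ext x
        simp only [Finset.mem_inter, hD, Finset.mem_filter, Finset.mem_univ, true_and,
          Finset.mem_image]
        constructor
        · rintro ⟨hx, y, hy, rfl⟩; exact ⟨hx, by simpa using hy⟩
        · rintro ⟨hx, hxi⟩; exact ⟨hx, x - i, hxi, by ring⟩
      have h2 : (Finset.univ.filter fun x : ZMod N => s x = 1 ∧ s (x - i) = 1).card
          = (Finset.univ.filter fun j : ZMod N => s (i - j) = 1 ∧ s (-j) = 1).card := by
        apply Finset.card_nbij' (i := fun x => i - x) (j := fun x => i - x)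
        · intro a ha
          simp only [Finset.mem_coe, Finset.mem_filter, Finset.mem_univ, true_and] at ha ⊢
          constructor
          · simpa using ha.1
          · have : -(i - a) = a - i := by ring
            rw [this]; exact ha.2
        · intro a ha
          simp only [Finset.mem_coe, Finset.mem_filter, Finset.mem_univ, true_and] at ha ⊢
          refine ⟨by simpa using ha.1, ?_⟩
          have : i - a - i = -a := by ring
          rw [this]; exact ha.2
        · intro a _; simp
        · intro a _; simp
      rw [← h2, ← h1, hdiff i hi]
      have : (N + 1) / 4 = L := by omega
      rw [this]
  -- determinant squared is a power of two
  have hdet2 : (circulant s).det ^ 2 = (2 : ℤ) ^ ((n - 2) * N + n) := by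
    have h1 : (circulant s).det ^ 2 = (circulant s * (circulant s)ᵀ).det := by
      rw [det_mul, det_transpose, sq]
    rw [h1, key]
    have hfun : (fun i : ZMod N => if i = 0 then ((2 * L : ℕ) : ℤ) else (L : ℤ))
        = (L : ℤ) • ((Pi.single 0 1 : ZMod N → ℤ) + fun _ => 1) := by
      funext i
      by_cases hi : i = 0 <;> simp [hi, Pi.single_apply] <;> push_cast <;> ring
    rw [hfun, circulant_smul, det_smul, circulant_add, circulant_single_one]
    have hJ : circulant (fun _ : ZMod N => (1 : ℤ))
        = replicateCol Unit (fun _ : ZMod N => (1:ℤ)) * replicateRow Unit (fun _ : ZMod N => (1:ℤ)) := by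
      ext i j
      simp [circulant_apply, mul_apply]
    rw [hJ, det_one_add_replicateCol_mul_replicateRow]
    have hdp : (fun _ : ZMod N => (1:ℤ)) ⬝ᵥ (fun _ => 1) = (N : ℤ) := by
      simp [dotProduct, ZMod.card]
    rw [hdp, ZMod.card]
    have hNn : 1 + (N : ℤ) = 2 ^ n := by
      have h1 : 1 ≤ 2 ^ n := Nat.one_le_two_pow
      have : (N : ℤ) = 2 ^ n - 1 := by
        rw [hN]; push_cast [h1]; ring
      rw [this]; ring
    rw [hNn, hL]
    push_cast
    rw [← pow_mul, ← pow_add]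
  -- part 1
  have part1 : Int.gcd (2 ^ N - 1) (circulant s).det = 1 := by
    set d := Int.gcd (2 ^ N - 1) (circulant s).det with hd
    have hdvd1 : (d : ℤ) ∣ 2 ^ N - 1 := Int.gcd_dvd_left _ _
    have hdvd2 : (d : ℤ) ∣ (circulant s).det := Int.gcd_dvd_right _ _
    have hdvd3 : (d : ℤ) ∣ (2 : ℤ) ^ ((n - 2) * N + n) := by
      rw [← hdet2]; exact hdvd2.trans (dvd_pow_self _ two_ne_zero)
    have hddn : d ∣ 2 ^ ((n - 2) * N + n) := by
      have : (d : ℤ) ∣ ((2 ^ ((n - 2) * N + n) : ℕ) : ℤ) := by push_cast; exact hdvd3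
      exact_mod_cast this
    have hodd : Odd d := by
      rw [Nat.odd_iff]
      by_contra h
      have h2d : 2 ∣ d := by omega
      have h2 : (2 : ℤ) ∣ 2 ^ N - 1 := (Int.natCast_dvd_natCast.mpr h2d : (2:ℤ) ∣ (d:ℤ)).trans hdvd1
      have h2' : (2 : ℤ) ∣ 2 ^ N := dvd_pow_self 2 (by omega)
      obtain ⟨a, ha⟩ := h2
      obtain ⟨b, hb⟩ := h2'
      omega
    exact (hodd.coprime_two_right.pow_right _).eq_one_of_dvd hddn
  refine ⟨part1, ?_⟩
  -- part 2
  rw [Nat.eq_one_iff_not_exists_prime_dvd]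
  intro p hp hpd
  haveI : Fact p.Prime := ⟨hp⟩
  have hp1 : (p : ℤ) ∣ ∑ i ∈ Finset.range N, s (i : ZMod N) * 2 ^ i :=
    (Int.natCast_dvd_natCast.mpr hpd : (p:ℤ) ∣ _).trans (Int.gcd_dvd_left _ _)
  have hp2 : (p : ℤ) ∣ 2 ^ N - 1 :=
    (Int.natCast_dvd_natCast.mpr hpd : (p:ℤ) ∣ _).trans (Int.gcd_dvd_right _ _)
  have h2N : (2 : ZMod p) ^ N = 1 := by
    have h0 : ((2 ^ N - 1 : ℤ) : ZMod p) = 0 := (ZMod.intCast_zmod_eq_zero_iff_dvd _ _).mpr hp2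
    push_cast at h0
    linear_combination h0
  set s' : ZMod N → ZMod p := fun i => ((s i : ℤ) : ZMod p) with hs'
  set w : ZMod N → ZMod p := fun i => (2 : ZMod p) ^ i.val with hw
  have hpow2 : ∀ a b : ZMod N, (2 : ZMod p) ^ (a + b).val = 2 ^ a.val * 2 ^ b.val := by
    intro a b
    have hv : (a + b).val = (a.val + b.val) % N := ZMod.val_add a b
    have hmod : a.val + b.val = N * ((a.val + b.val) / N) + (a.val + b.val) % N :=
      (Nat.div_add_mod _ _).symm
    rw [← pow_add, hmod, pow_add, pow_mul, h2N, one_pow, one_mul, hv]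
  have hPzero : ∑ k : ZMod N, 2 ^ k.val * s' k = 0 := by
    have h0 : ((∑ i ∈ Finset.range N, s (i : ZMod N) * 2 ^ i : ℤ) : ZMod p) = 0 :=
      (ZMod.intCast_zmod_eq_zero_iff_dvd _ _).mpr hp1
    push_cast at h0
    rw [← h0]
    apply Finset.sum_nbij' (i := fun k : ZMod N => k.val) (j := fun i : ℕ => (i : ZMod N))
    · intro a _; exact Finset.mem_range.mpr (ZMod.val_lt a)
    · intro a _; exact Finset.mem_univ _
    · intro a _; exact ZMod.natCast_zmod_val a
    · intro a ha; exact ZMod.val_cast_of_lt (Finset.mem_range.mp ha)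
    · intro a _
      rw [ZMod.natCast_zmod_val a]
      ring
  have hvm : w ᵥ* circulant s' = 0 := by
    funext j
    have h1 : (w ᵥ* circulant s') j = ∑ i, 2 ^ i.val * s' (i - j) := by
      simp [vecMul, dotProduct, circulant_apply, hw]
    have h2 : ∑ i, (2 : ZMod p) ^ i.val * s' (i - j)
        = ∑ k : ZMod N, 2 ^ (k + j).val * s' k := by
      refine (Fintype.sum_equiv (Equiv.addRight j) _ _ fun k => ?_).symm
      simp
    rw [h1, h2]
    calc ∑ k : ZMod N, (2 : ZMod p) ^ (k + j).val * s' k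
        = ∑ k : ZMod N, (2 ^ k.val * s' k) * 2 ^ j.val := by
          refine Finset.sum_congr rfl fun k _ => ?_
          rw [hpow2]; ring
      _ = (∑ k : ZMod N, 2 ^ k.val * s' k) * 2 ^ j.val := by rw [← Finset.sum_mul]
      _ = 0 := by rw [hPzero, zero_mul]
  have hwne : w ≠ 0 := by
    intro h
    have h0 : w 0 = 0 := congrFun h 0
    rw [hw] at h0
    simp [ZMod.val_zero] at h0
  have hdet0 : (circulant s').det = 0 := by
    by_contra h
    exact hwne (Matrix.eq_zero_of_vecMul_eq_zero h hvm)
  have hpdet : (p : ℤ) ∣ (circulant s).det := by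
    rw [← ZMod.intCast_zmod_eq_zero_iff_dvd]
    have : ((circulant s).det : ZMod p) = (circulant s').det := by
      rw [← Matrix.map_circulant s (Int.cast : ℤ → ZMod p)]
      exact (RingHom.map_det (Int.castRingHom (ZMod p)) (circulant s)).symm ▸ rfl
    rw [this, hdet0]
  have : (p : ℤ) ∣ (1 : ℤ) := by
    have := Int.dvd_gcd hp2 hpdet
    rw [part1] at this
    exact_mod_cast this
  have hple := Int.le_of_dvd one_pos this
  have := hp.two_le
  omega
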